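/- For binary sequences σ ∈ {0,1}^n and a permutation π of {1,…,n}, define ξ_i(σ) = Σ_{j<i} σ_j, and for the reordered sequence σ' with σ'_k = σ_{π(k)} define ξ'_i(σ) = Σ_{j : π⁻¹(j) < π⁻¹(i)} σ_j, and π_σ = Σ_{j<k, π⁻¹(j)>π⁻¹(k)} σ_j σ_k. Then for any index i with σ_i = 0, setting σ+e_i to be σ with the i-th entry changed to 1, we have ξ_i(σ) + π_{σ+e_i} ≡ ξ'_i(σ) + π_σ (mod 2). -/
import Mathlib


open Finset

/-- ξ_i(σ) = Σ_{j<i} σ_j (computed in ℤ/2, so equalities are congruences mod 2). -/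
def xi {n : ℕ} (i : Fin n) (σ : Fin n → ZMod 2) : ZMod 2 :=
  ∑ j ∈ univ.filter (fun j => j < i), σ j

/-- ξ'_i(σ) = Σ_{j : π⁻¹(j) < π⁻¹(i)} σ_j. -/
def xi' {n : ℕ} (π : Equiv.Perm (Fin n)) (i : Fin n) (σ : Fin n → ZMod 2) : ZMod 2 :=
  ∑ j ∈ univ.filter (fun j => π.symm j < π.symm i), σ j

/-- π_σ = Σ_{j<k, π⁻¹(j)>π⁻¹(k)} σ_j σ_k. -/
def piSigma {n : ℕ} (π : Equiv.Perm (Fin n)) (σ : Fin n → ZMod 2) : ZMod 2 :=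
  ∑ p ∈ univ.filter (fun p : Fin n × Fin n =>
      p.1 < p.2 ∧ π.symm p.2 < π.symm p.1), σ p.1 * σ p.2

/-- The sign identity for crossing reordering: if σ_i = 0 then
ξ_i(σ) + π_{σ+e_i} ≡ ξ'_i(σ) + π_σ (mod 2), where σ+e_i changes the i-th entry to 1. -/
theorem reorder_sign_identity {n : ℕ} (π : Equiv.Perm (Fin n))
    (σ : Fin n → ZMod 2) (i : Fin n) (hi : σ i = 0) :
    xi i σ + piSigma π (Function.update σ i 1)
      = xi' π i σ + piSigma π σ := by
  classical
  set σ' := Function.update σ i 1 with hσ'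
  have hterm : ∀ p ∈ univ.filter (fun p : Fin n × Fin n =>
      p.1 < p.2 ∧ π.symm p.2 < π.symm p.1),
      σ' p.1 * σ' p.2 = σ p.1 * σ p.2
        + (if p.1 = i then σ p.2 else 0) + (if p.2 = i then σ p.1 else 0) := by
    intro p hp
    simp only [mem_filter, mem_univ, true_and] at hp
    have hne : p.1 ≠ p.2 := ne_of_lt hp.1
    rcases eq_or_ne p.1 i with h1 | h1 <;> rcases eq_or_ne p.2 i with h2 | h2
    · exact absurd (h1.trans h2.symm) hne
    · simp [hσ', h1, h2, Function.update, hi]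
    · simp [hσ', h1, h2, Function.update, hi]
    · simp [hσ', Function.update, h1, h2]
  have hB : (∑ p ∈ univ.filter (fun p : Fin n × Fin n =>
        p.1 < p.2 ∧ π.symm p.2 < π.symm p.1), if p.1 = i then σ p.2 else 0)
      = ∑ k ∈ univ.filter (fun k => i < k ∧ π.symm k < π.symm i), σ k := by
    rw [Finset.sum_filter, Fintype.sum_prod_type, Finset.sum_eq_single i]
    · rw [Finset.sum_filter]
      apply Finset.sum_congr rfl
      intro k _
      by_cases h : i < k ∧ π.symm k < π.symm i <;> simp [h]
    · intro j _ hj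
      simp [hj]
    · simp
  have hC : (∑ p ∈ univ.filter (fun p : Fin n × Fin n =>
        p.1 < p.2 ∧ π.symm p.2 < π.symm p.1), if p.2 = i then σ p.1 else 0)
      = ∑ j ∈ univ.filter (fun j => j < i ∧ π.symm i < π.symm j), σ j := by
    rw [Finset.sum_filter, Fintype.sum_prod_type_right, Finset.sum_eq_single i]
    · rw [Finset.sum_filter]
      apply Finset.sum_congr rfl
      intro j _
      by_cases h : j < i ∧ π.symm i < π.symm j <;> simp [h]
    · intro k _ hk
      simp [hk]
    · simp
  have hsplit : piSigma π σ' = piSigma π σ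
      + (∑ k ∈ univ.filter (fun k => i < k ∧ π.symm k < π.symm i), σ k)
      + (∑ j ∈ univ.filter (fun j => j < i ∧ π.symm i < π.symm j), σ j) := by
    rw [piSigma, Finset.sum_congr rfl hterm, Finset.sum_add_distrib,
      Finset.sum_add_distrib, hB, hC]
    rfl
  rw [hsplit]
  have hxi : xi i σ
      = (∑ j ∈ univ.filter (fun j => j < i ∧ π.symm j < π.symm i), σ j)
      + (∑ j ∈ univ.filter (fun j => j < i ∧ π.symm i < π.symm j), σ j) := by
    rw [xi, ← Finset.sum_filter_add_sum_filter_not (univ.filter (fun j => j < i))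
      (fun j => π.symm j < π.symm i), Finset.filter_filter, Finset.filter_filter]
    congr 1
    · apply Finset.sum_congr _ (fun _ _ => rfl)
      apply Finset.filter_congr
      intro j _
      constructor
      · rintro ⟨h1, h2⟩
        refine ⟨h1, lt_of_le_of_ne (not_lt.mp h2) ?_⟩
        intro h
        exact absurd (π.symm.injective h).symm (ne_of_lt h1)
      · rintro ⟨h1, h2⟩
        exact ⟨h1, not_lt.mpr h2.le⟩
  have hxi' : xi' π i σ
      = (∑ j ∈ univ.filter (fun j => j < i ∧ π.symm j < π.symm i), σ j)
      + (∑ j ∈ univ.filter (fun j => i < j ∧ π.symm j < π.symm i), σ j) := by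
    rw [xi', ← Finset.sum_filter_add_sum_filter_not
      (univ.filter (fun j => π.symm j < π.symm i)) (fun j => j < i),
      Finset.filter_filter, Finset.filter_filter]
    congr 1
    · apply Finset.sum_congr _ (fun _ _ => rfl)
      apply Finset.filter_congr
      intro j _
      constructor
      · rintro ⟨h1, h2⟩; exact ⟨h2, h1⟩
      · rintro ⟨h1, h2⟩; exact ⟨h2, h1⟩
    · apply Finset.sum_congr _ (fun _ _ => rfl)
      apply Finset.filter_congr
      intro j _
      constructor
      · rintro ⟨h1, h2⟩
        refine ⟨lt_of_le_of_ne (not_lt.mp h2) ?_, h1⟩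
        intro h
        rw [h] at h1
        exact absurd rfl (ne_of_lt h1)
      · rintro ⟨h1, h2⟩
        exact ⟨h2, not_lt.mpr h1.le⟩
  rw [hxi, hxi']
  have h2 : ∀ x : ZMod 2, x + x = 0 := by decide
  set a := ∑ j ∈ univ.filter (fun j => j < i ∧ π.symm j < π.symm i), σ j
  set b := ∑ j ∈ univ.filter (fun j => j < i ∧ π.symm i < π.symm j), σ j
  set c := ∑ j ∈ univ.filter (fun j => i < j ∧ π.symm j < π.symm i), σ j
  set d := piSigma π σ
  calc a + b + (d + c + b) = a + c + d + (b + b) := by ring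
    _ = a + c + d := by rw [h2]; ring
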